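/- Fix ℓ ∈ ℕ. Let Q ∈ Δ_m have full support (Q_i > 0 for all i), let Π be nonempty with Q ∉ Π, and assume the regularity condition on Π. Then lim_{n→∞} D_KL(Π_{n,ℓ} ∩ 𝒫_n ‖ Q) = D_KL(Π ‖ Q), where the infimum over the empty set is +∞. -/

import Mathlib

open Filter

noncomputable section

/-- The set of types of length-`n` sequences over an alphabet of size `m`:
probability vectors all of whose coordinates are integer multiples of `1/n`. -/
def typesP (m n : ℕ) : Set (Fin m → ℝ) :=
  {p | p ∈ stdSimplex ℝ (Fin m) ∧ ∀ i, ∃ k : ℕ, p i = (k : ℝ) / (n : ℝ)}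

/-- KL divergence `D_KL(P‖Q) = Σ_i P_i ln(P_i/Q_i)`. -/
def klDiv {m : ℕ} (P Q : Fin m → ℝ) : ℝ :=
  ∑ i, P i * Real.log (P i / Q i)

/-- KL divergence of a set of distributions from `Q` (as an extended real,
so that the infimum over the empty set is `+∞`). -/
def klDivSet {m : ℕ} (S : Set (Fin m → ℝ)) (Q : Fin m → ℝ) : EReal :=
  ⨅ P : S, ((klDiv P.1 Q : ℝ) : EReal)

/-- The set `Π` determined by the `K × m` matrix `A` over the alphabet of size
`m + 1`: probability vectors whose first `m` coordinates satisfy at least one of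
the `K` linear constraints `(A p)_i ≥ 0`. -/
def PiSet {K m : ℕ} (A : Matrix (Fin K) (Fin m) ℝ) : Set (Fin (m + 1) → ℝ) :=
  {p | p ∈ stdSimplex ℝ (Fin (m + 1)) ∧ ∃ i : Fin K, 0 ≤ ∑ j, A i j * p j.castSucc}

/-- The shifted set `Π_{n,ℓ}`: at least one constraint `(A p)_i ≥ ℓ/(n−ℓ)`. -/
def PiSetShift {K m : ℕ} (A : Matrix (Fin K) (Fin m) ℝ) (n ℓ : ℕ) :
    Set (Fin (m + 1) → ℝ) :=
  {p | p ∈ stdSimplex ℝ (Fin (m + 1)) ∧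
    ∃ i : Fin K, (ℓ : ℝ) / ((n : ℝ) - (ℓ : ℝ)) ≤ ∑ j, A i j * p j.castSucc}

/-- The regularity condition: every point of `Π` is a limit of points of the
simplex satisfying some constraint strictly. -/
def RegularPi {K m : ℕ} (A : Matrix (Fin K) (Fin m) ℝ) : Prop :=
  ∀ p ∈ PiSet A, p ∈ closure {q : Fin (m + 1) → ℝ |
    q ∈ stdSimplex ℝ (Fin (m + 1)) ∧ ∃ i : Fin K, 0 < ∑ j, A i j * q j.castSucc}

/-- for full-support `Q ∉ Π` with `Π` nonempty and regular, and any
fixed `ℓ ∈ ℕ`, `lim_{n→∞} D_KL(Π_{n,ℓ} ∩ 𝒫_n ‖ Q) = D_KL(Π ‖ Q)`. -/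

lemma klDiv_eq' {m : ℕ} (P Q : Fin m → ℝ) (hQ : ∀ i, 0 < Q i) :
    klDiv P Q = ∑ i, (P i * Real.log (P i) - P i * Real.log (Q i)) := by
  unfold klDiv
  refine Finset.sum_congr rfl fun i _ => ?_
  by_cases h : P i = 0
  · simp [h]
  · rw [Real.log_div h (hQ i).ne', mul_sub]

lemma continuous_klDiv' {m : ℕ} (Q : Fin m → ℝ) (hQ : ∀ i, 0 < Q i) :
    Continuous fun P : Fin m → ℝ => klDiv P Q := by
  have h : (fun P : Fin m → ℝ => klDiv P Q) =
      fun P => ∑ i, (P i * Real.log (P i) - P i * Real.log (Q i)) := by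
    funext P; exact klDiv_eq' P Q hQ
  rw [h]
  exact continuous_finset_sum _ fun i _ =>
    (Real.continuous_mul_log.comp (continuous_apply i)).sub
      ((continuous_apply i).mul continuous_const)

lemma floor_div_tendsto' (a : ℝ) (ha : 0 ≤ a) :
    Tendsto (fun n : ℕ => (⌊a * (n : ℝ)⌋₊ : ℝ) / (n : ℝ)) atTop (nhds a) :=
  (tendsto_nat_floor_mul_div_atTop ha).comp tendsto_natCast_atTop_atTop

theorem kl_projection_of_shifted_types_tendsto
    {K m : ℕ} (A : Matrix (Fin K) (Fin m) ℝ) (ℓ : ℕ)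
    (Q : Fin (m + 1) → ℝ) (hQ : Q ∈ stdSimplex ℝ (Fin (m + 1)))
    (hQpos : ∀ i, 0 < Q i)
    (hne : (PiSet A).Nonempty) (hQnot : Q ∉ PiSet A)
    (hreg : RegularPi A) :
    Tendsto (fun n : ℕ => klDivSet (PiSetShift A n ℓ ∩ typesP (m + 1) n) Q) atTop
      (nhds (klDivSet (PiSet A) Q)) := by
  rw [tendsto_order]
  constructor
  · -- lower bound: for n ≥ ℓ the shifted set is inside PiSet A
    intro a ha
    filter_upwards [eventually_ge_atTop ℓ] with n hn
    refine lt_of_lt_of_le ha ?_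
    refine le_iInf fun P => ?_
    obtain ⟨p, hp⟩ := P
    have hpPi : p ∈ PiSet A := by
      obtain ⟨⟨hps, i, hi⟩, _⟩ := hp
      refine ⟨hps, i, le_trans ?_ hi⟩
      exact div_nonneg (Nat.cast_nonneg _) (sub_nonneg.2 (Nat.cast_le.2 hn))
    exact iInf_le (fun P : PiSet A => ((klDiv P.1 Q : ℝ) : EReal)) ⟨p, hpPi⟩
  · -- upper bound
    intro b hb
    obtain ⟨r, hDr, hrb⟩ := EReal.exists_between_coe_real hb
    have hex : ∃ P : PiSet A, ((klDiv P.1 Q : ℝ) : EReal) < ((r : ℝ) : EReal) := by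
      rw [← iInf_lt_iff]; exact hDr
    obtain ⟨⟨P, hP⟩, hPr⟩ := hex
    have hPr' : klDiv P Q < r := by exact_mod_cast hPr
    -- find q in the strict set with klDiv q Q < r
    have hopen : IsOpen {p : Fin (m + 1) → ℝ | klDiv p Q < r} :=
      isOpen_lt (continuous_klDiv' Q hQpos) continuous_const
    obtain ⟨q, hqlt, hqsimplex, i0, hδ⟩ :=
      _root_.mem_closure_iff.1 (hreg P hP) _ hopen hPr'
    set δ : ℝ := ∑ j, A i0 j * q j.castSucc with hδdef
    -- the rounded types
    set S : ℕ → ℕ := fun n => ∑ j : Fin m, ⌊q j.castSucc * (n : ℝ)⌋₊ with hSdef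
    set p : ℕ → Fin (m + 1) → ℝ := fun n j =>
      if j = Fin.last m then ((n - S n : ℕ) : ℝ) / (n : ℝ)
      else (⌊q j * (n : ℝ)⌋₊ : ℝ) / (n : ℝ) with hpdef
    have hq0 : ∀ j, 0 ≤ q j := fun j => hqsimplex.1 j
    have hqsum : ∑ j, q j = 1 := hqsimplex.2
    have hqcs : ∑ j : Fin m, q j.castSucc = 1 - q (Fin.last m) := by
      have := Fin.sum_univ_castSucc (f := q)
      linarith [this, hqsum]
    have hqcs1 : ∑ j : Fin m, q j.castSucc ≤ 1 := by
      have := hq0 (Fin.last m); linarith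
    have hSle : ∀ n : ℕ, S n ≤ n := by
      intro n
      have h1 : ((S n : ℕ) : ℝ) ≤ (n : ℝ) := by
        rw [hSdef]
        push_cast
        calc (∑ j : Fin m, (⌊q j.castSucc * (n : ℝ)⌋₊ : ℝ))
            ≤ ∑ j : Fin m, q j.castSucc * (n : ℝ) :=
              Finset.sum_le_sum fun j _ =>
                Nat.floor_le (mul_nonneg (hq0 _) (Nat.cast_nonneg _))
          _ = (∑ j : Fin m, q j.castSucc) * (n : ℝ) := by rw [Finset.sum_mul]
          _ ≤ 1 * (n : ℝ) := by
              exact mul_le_mul_of_nonneg_right hqcs1 (Nat.cast_nonneg _)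
          _ = (n : ℝ) := one_mul _
      exact_mod_cast h1
    have hp_cs : ∀ (n : ℕ) (j : Fin m),
        p n j.castSucc = (⌊q j.castSucc * (n : ℝ)⌋₊ : ℝ) / (n : ℝ) := by
      intro n j
      simp [hpdef, (Fin.castSucc_lt_last j).ne]
    have hp_last : ∀ n : ℕ, p n (Fin.last m) = ((n - S n : ℕ) : ℝ) / (n : ℝ) := by
      intro n; simp [hpdef]
    have hp_nonneg : ∀ (n : ℕ) (j : Fin (m + 1)), 0 ≤ p n j := by
      intro n j
      rw [hpdef]
      dsimp only
      split <;> exact div_nonneg (Nat.cast_nonneg _) (Nat.cast_nonneg _)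
    have hp_sum : ∀ n : ℕ, 1 ≤ n → ∑ j, p n j = 1 := by
      intro n hn
      have hn0 : (n : ℝ) ≠ 0 := Nat.cast_ne_zero.2 (by omega)
      rw [Fin.sum_univ_castSucc (f := p n), hp_last]
      have : ∑ j : Fin m, p n j.castSucc = ((S n : ℕ) : ℝ) / (n : ℝ) := by
        rw [hSdef]
        push_cast
        rw [Finset.sum_div]
        exact Finset.sum_congr rfl fun j _ => hp_cs n j
      rw [this, Nat.cast_sub (hSle n)]
      field_simp
      ring
    -- convergence of types to q
    have htend : Tendsto (fun n => p n) atTop (nhds q) := by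
      rw [tendsto_pi_nhds]
      intro j
      refine Fin.lastCases ?_ ?_ j
      · -- last coordinate
        have hsum_t : Tendsto (fun n : ℕ => ∑ j : Fin m, p n j.castSucc) atTop
            (nhds (∑ j : Fin m, q j.castSucc)) := by
          refine tendsto_finset_sum _ fun j _ => ?_
          have := floor_div_tendsto' (q j.castSucc) (hq0 _)
          refine this.congr fun n => ?_
          rw [hp_cs n j]
        have h1 : Tendsto (fun n : ℕ => 1 - ∑ j : Fin m, p n j.castSucc) atTop
            (nhds (q (Fin.last m))) := by
          have := (tendsto_const_nhds (x := (1 : ℝ)) (f := atTop (α := ℕ))).sub hsum_t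
          rwa [hqcs, sub_sub_cancel] at this
        refine h1.congr' ?_
        filter_upwards [eventually_ge_atTop 1] with n hn
        have hn0 : (n : ℝ) ≠ 0 := Nat.cast_ne_zero.2 (by omega)
        have hs : ∑ j : Fin m, p n j.castSucc = ((S n : ℕ) : ℝ) / (n : ℝ) := by
          rw [hSdef]; push_cast; rw [Finset.sum_div]
          exact Finset.sum_congr rfl fun j _ => hp_cs n j
        rw [hs, hp_last, Nat.cast_sub (hSle n)]
        field_simp
      · intro j
        have := floor_div_tendsto' (q j.castSucc) (hq0 _)
        refine this.congr fun n => ?_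
        rw [hp_cs n j]
    -- constraint values converge to δ > 0
    have hconstr : Tendsto (fun n : ℕ => ∑ j, A i0 j * p n j.castSucc) atTop (nhds δ) := by
      rw [hδdef]
      refine tendsto_finset_sum _ fun j _ => ?_
      exact tendsto_const_nhds.mul (((continuous_apply j.castSucc).tendsto q).comp htend)
    have hthr : Tendsto (fun n : ℕ => (ℓ : ℝ) / ((n : ℝ) - (ℓ : ℝ))) atTop (nhds 0) := by
      refine Tendsto.div_atTop tendsto_const_nhds ?_
      exact tendsto_atTop_add_const_right _ _ tendsto_natCast_atTop_atTop
    have hkl : Tendsto (fun n : ℕ => klDiv (p n) Q) atTop (nhds (klDiv q Q)) :=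
      ((continuous_klDiv' Q hQpos).tendsto q).comp htend
    have ev1 : ∀ᶠ n : ℕ in atTop, δ / 2 < ∑ j, A i0 j * p n j.castSucc :=
      hconstr.eventually (eventually_gt_nhds (by linarith))
    have ev2 : ∀ᶠ n : ℕ in atTop, (ℓ : ℝ) / ((n : ℝ) - (ℓ : ℝ)) < δ / 2 :=
      hthr.eventually (eventually_lt_nhds (by linarith))
    have ev3 : ∀ᶠ n : ℕ in atTop, klDiv (p n) Q < r :=
      hkl.eventually (eventually_lt_nhds hqlt)
    filter_upwards [ev1, ev2, ev3, eventually_ge_atTop 1] with n h1 h2 h3 hn1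
    have hsimplex : p n ∈ stdSimplex ℝ (Fin (m + 1)) :=
      ⟨hp_nonneg n, hp_sum n hn1⟩
    have hmem : p n ∈ PiSetShift A n ℓ ∩ typesP (m + 1) n := by
      refine ⟨⟨hsimplex, i0, le_of_lt (lt_trans h2 h1)⟩, hsimplex, fun j => ?_⟩
      rw [hpdef]
      dsimp only
      split
      · exact ⟨n - S n, rfl⟩
      · exact ⟨⌊q j * (n : ℝ)⌋₊, rfl⟩
    calc klDivSet (PiSetShift A n ℓ ∩ typesP (m + 1) n) Q
        ≤ ((klDiv (p n) Q : ℝ) : EReal) :=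
          iInf_le (fun P : (PiSetShift A n ℓ ∩ typesP (m + 1) n : Set _) =>
            ((klDiv P.1 Q : ℝ) : EReal)) ⟨p n, hmem⟩
      _ < ((r : ℝ) : EReal) := by exact_mod_cast h3
      _ < b := hrb


end
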